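/- Let H be a Hilbert space, A ⊆ B(H) a C*-subalgebra. Suppose f ∈ C_u([0,∞), B(H)) satisfies [f(t), a] ∈ K(H) for all t and all a ∈ A, with ‖[f(·), a]‖ vanishing at infinity for each a ∈ A. Define F : [0,∞) → B(H^∞) on H^∞ = ⊕_{n=0}^∞ H by F(t) = (f(t), f(t+1), f(t+2), ...) acting diagonally. Then F is bounded and uniformly continuous, and for every a ∈ A, the function t ↦ [F(t), a^∞] takes values in K(H^∞) and vanishes in norm at infinity, where a^∞ = ⊕_n a. -/

import Mathlib

open scoped NNReal ENNReal
open Filter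

noncomputable section

variable {H : Type*} [NormedAddCommGroup H] [InnerProductSpace ℂ H] [CompleteSpace H]

local notation "Hinf" => lp (fun _ : ℕ => H) 2

lemma diag_norm_le (T : Hinf →L[ℂ] Hinf) (b : ℕ → H →L[ℂ] H)
    (hT : ∀ (h : Hinf) (n : ℕ), (T h : ∀ _ : ℕ, H) n = b n (h n))
    {C : ℝ} (hC : 0 ≤ C) (hb : ∀ n, ‖b n‖ ≤ C) : ‖T‖ ≤ C := by
  have h2 : (0:ℝ) < (2:ℝ≥0∞).toReal := by norm_num
  refine T.opNorm_le_bound hC fun h => ?_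
  have HT := lp.hasSum_norm h2 (T h)
  have Hh := (lp.hasSum_norm h2 h).mul_left (C ^ (2:ℝ≥0∞).toReal)
  have key : ‖T h‖ ^ (2:ℝ≥0∞).toReal ≤ C ^ (2:ℝ≥0∞).toReal * ‖h‖ ^ (2:ℝ≥0∞).toReal := by
    refine hasSum_le (fun n => ?_) HT Hh
    rw [hT h n, ← Real.mul_rpow hC (norm_nonneg _)]
    exact Real.rpow_le_rpow (norm_nonneg _)
      (((b n).le_opNorm _).trans (by gcongr; exact hb n)) h2.le
  rw [← Real.mul_rpow hC (norm_nonneg _)] at key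
  exact (Real.rpow_le_rpow_iff (norm_nonneg _) (by positivity) h2).mp key

lemma lp_eval_norm_le (h : Hinf) (n : ℕ) : ‖(h : ∀ _ : ℕ, H) n‖ ≤ ‖h‖ :=
  lp.norm_apply_le_norm (by norm_num) h n

def lpEval (n : ℕ) : Hinf →L[ℂ] H :=
  LinearMap.mkContinuous
    { toFun := fun x => (x : ∀ _ : ℕ, H) n,
      map_add' := fun x y => rfl,
      map_smul' := fun c x => rfl } 1
    (fun x => by rw [one_mul]; exact lp_eval_norm_le x n)

lemma lpEval_apply (n : ℕ) (x : Hinf) : lpEval n x = (x : ∀ _ : ℕ, H) n := rfl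

def lpSingle (n : ℕ) : H →L[ℂ] Hinf :=
  LinearMap.mkContinuous
    { toFun := fun v => lp.single 2 n v,
      map_add' := fun x y => by
        ext m
        by_cases hm : m = n
        · subst hm; simp [lp.single_apply_self]
        · simp [lp.single_apply_ne _ _ _ hm]
      map_smul' := fun c x => by simp [lp.single_smul] } 1
    (fun v => by
      simpa using (lp.norm_single (by norm_num : (0:ℝ) < (2:ℝ≥0∞).toReal)
        (fun _ : ℕ => v) n).le)

lemma lpSingle_apply (n : ℕ) (v : H) : lpSingle n v = lp.single 2 n v := rfl

lemma diag_compact (T : Hinf →L[ℂ] Hinf) (b : ℕ → H →L[ℂ] H)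
    (hT : ∀ (h : Hinf) (n : ℕ), (T h : ∀ _ : ℕ, H) n = b n (h n))
    (hcpt : ∀ n, IsCompactOperator ⇑(b n))
    (hvan : Tendsto (fun n : ℕ => ‖b n‖) atTop (nhds 0)) :
    IsCompactOperator ⇑T := by
  set S : ℕ → (Hinf →L[ℂ] Hinf) := fun N =>
    ∑ n ∈ Finset.range N, (lpSingle n).comp ((b n).comp (lpEval n)) with hS
  have hS_apply : ∀ (N : ℕ) (h : Hinf) (m : ℕ),
      ((S N) h : ∀ _ : ℕ, H) m = if m < N then b m ((h : ∀ _ : ℕ, H) m) else 0 := by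
    intro N h m
    have : ((S N) h : ∀ _ : ℕ, H) m
        = ∑ n ∈ Finset.range N, (lp.single 2 n (b n ((h : ∀ _ : ℕ, H) n)) : ∀ _ : ℕ, H) m := by
      simp only [hS, ContinuousLinearMap.sum_apply, lp.coeFn_sum, Finset.sum_apply,
        lpSingle_apply, lpEval_apply, ContinuousLinearMap.comp_apply]
    rw [this]
    by_cases hm : m < N
    · rw [Finset.sum_eq_single m]
      · simp [lp.single_apply_self, hm]
      · intro n _ hn
        exact lp.single_apply_ne _ _ _ (Ne.symm hn)
      · intro hmem
        exact absurd (Finset.mem_range.mpr hm) hmem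
    · rw [if_neg hm]
      refine Finset.sum_eq_zero fun n hn => ?_
      exact lp.single_apply_ne _ _ _ (by rintro rfl; exact hm (Finset.mem_range.mp hn))
  have hcpt_S : ∀ N, IsCompactOperator ⇑(S N) := by
    intro N
    rw [hS]
    refine Finset.sum_induction _ (fun g : Hinf →L[ℂ] Hinf => IsCompactOperator ⇑g)
      (fun x y hx hy => ?_) (by simpa using isCompactOperator_zero) (fun n _ => ?_)
    · show IsCompactOperator ⇑(x + y)
      rw [ContinuousLinearMap.coe_add']; exact hx.add hy
    · exact (((hcpt n).comp_clm (lpEval n)).clm_comp (lpSingle n))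
  have htend : Tendsto S atTop (nhds T) := by
    rw [Metric.tendsto_atTop]
    intro ε hε
    rw [Metric.tendsto_atTop] at hvan
    obtain ⟨M, hM⟩ := hvan (ε / 2) (by positivity)
    refine ⟨M, fun N hN => ?_⟩
    rw [dist_eq_norm, ← neg_sub, norm_neg]
    have hbound : ‖T - S N‖ ≤ ε / 2 := by
      refine diag_norm_le _ (fun n => if n < N then 0 else b n) (fun h n => ?_)
        (by positivity) (fun n => ?_)
      · simp only [ContinuousLinearMap.sub_apply, lp.coeFn_sub, Pi.sub_apply, hT, hS_apply]
        by_cases hn : n < N <;> simp [hn]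
      · by_cases hn : n < N
        · simp [hn]; positivity
        · simp only [hn, if_false]
          have := hM n (le_trans hN (not_lt.mp hn))
          rw [Real.dist_eq, sub_zero, abs_of_nonneg (norm_nonneg _)] at this
          exact this.le
    exact lt_of_le_of_lt hbound (by linarith)
  exact isCompactOperator_of_tendsto htend (Eventually.of_forall hcpt_S)



/-- Let `A ⊆ B(H)` be a C*-subalgebra, and let
`f ∈ C_u([0,∞), B(H))` satisfy `[f(t), a] ∈ K(H)` for all `t`, with
`‖[f(t), a]‖ → 0` as `t → ∞`, for each `a ∈ A`.  Let
`F(t) = (f(t), f(t+1), f(t+2), ...)` act diagonally on `H^∞ = ⊕ₙ H`.  Then `F` is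
bounded and uniformly continuous, and for every `a ∈ A`, the function
`t ↦ [F(t), a^∞]` takes values in `K(H^∞)` and vanishes in norm at infinity, where
`a^∞ = ⊕ₙ a` is the diagonal operator. -/
theorem stmt14
    (A : StarSubalgebra ℂ (H →L[ℂ] H))
    (f : ℝ≥0 → (H →L[ℂ] H))
    (hf_u : UniformContinuous f) (hf_bdd : ∃ C, ∀ t, ‖f t‖ ≤ C)
    (hf_cpt : ∀ a ∈ A, ∀ t, IsCompactOperator ⇑(f t * a - a * f t))
    (hf_van : ∀ a ∈ A, Tendsto (fun t => ‖f t * a - a * f t‖) atTop (nhds 0))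
    (F : ℝ≥0 → (Hinf →L[ℂ] Hinf))
    (hF : ∀ (t : ℝ≥0) (h : Hinf) (n : ℕ),
      (F t h : ∀ _ : ℕ, H) n = f (t + (n : ℝ≥0)) (h n)) :
    (∃ C, ∀ t, ‖F t‖ ≤ C) ∧ UniformContinuous F ∧
    ∀ a ∈ A, ∀ ainf : Hinf →L[ℂ] Hinf,
      (∀ (h : Hinf) (n : ℕ), (ainf h : ∀ _ : ℕ, H) n = a (h n)) →
      (∀ t, IsCompactOperator ⇑(F t * ainf - ainf * F t)) ∧
      Tendsto (fun t => ‖F t * ainf - ainf * F t‖) atTop (nhds 0) := by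
  obtain ⟨C, hC⟩ := hf_bdd
  have hC0 : 0 ≤ C := (norm_nonneg (f 0)).trans (hC 0)
  refine ⟨⟨C, fun t => diag_norm_le (F t) (fun n => f (t + n)) (hF t) hC0 (fun n => hC _)⟩,
    ?_, ?_⟩
  · rw [Metric.uniformContinuous_iff]
    intro ε hε
    obtain ⟨δ, hδ, hδ'⟩ := Metric.uniformContinuous_iff.mp hf_u (ε / 2) (by positivity)
    refine ⟨δ, hδ, @fun s t hst => ?_⟩
    have hb : ∀ n : ℕ, ‖f (s + n) - f (t + n)‖ ≤ ε / 2 := by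
      intro n
      have hd : dist (s + (n : ℝ≥0)) (t + (n : ℝ≥0)) < δ := by
        rw [NNReal.dist_eq] at hst ⊢
        push_cast
        simpa using hst
      have := hδ' hd
      rw [dist_eq_norm] at this
      exact this.le
    have hFd : ‖F s - F t‖ ≤ ε / 2 := by
      refine diag_norm_le _ (fun n => f (s + n) - f (t + n)) (fun h n => ?_)
        (by positivity) hb
      simp [ContinuousLinearMap.sub_apply, lp.coeFn_sub, Pi.sub_apply, hF]
    calc dist (F s) (F t) = ‖F s - F t‖ := dist_eq_norm _ _
      _ ≤ ε / 2 := hFd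
      _ < ε := by linarith
  · intro a ha ainf hainf
    have hblock : ∀ (t : ℝ≥0) (h : Hinf) (n : ℕ),
        ((F t * ainf - ainf * F t) h : ∀ _ : ℕ, H) n
          = (f (t + n) * a - a * f (t + n)) ((h : ∀ _ : ℕ, H) n) := by
      intro t h n
      simp [ContinuousLinearMap.sub_apply, lp.coeFn_sub, Pi.sub_apply,
        ContinuousLinearMap.mul_apply, hF, hainf]
    refine ⟨fun t => ?_, ?_⟩
    · refine diag_compact _ (fun n => f (t + n) * a - a * f (t + n)) (hblock t)
        (fun n => hf_cpt a ha _) ?_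
      have h1 : Tendsto (fun n : ℕ => t + (n : ℝ≥0)) atTop atTop :=
        tendsto_atTop_mono (fun n => le_add_self) tendsto_natCast_atTop_atTop
      exact (hf_van a ha).comp h1
    · rw [Metric.tendsto_atTop]
      intro ε hε
      obtain ⟨M, hM⟩ := Metric.tendsto_atTop.mp (hf_van a ha) (ε / 2) (by positivity)
      refine ⟨M, fun t ht => ?_⟩
      have hFb : ‖F t * ainf - ainf * F t‖ ≤ ε / 2 := by
        refine diag_norm_le _ _ (hblock t) (by positivity) (fun n => ?_)
        have := hM (t + n) (le_trans ht le_self_add)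
        rw [Real.dist_eq, sub_zero, abs_of_nonneg (norm_nonneg _)] at this
        exact this.le
      rw [Real.dist_eq, sub_zero, abs_of_nonneg (norm_nonneg _)]
      linarith

end
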